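/- Let i: M ↪ Z be an embedding which is a homotopy equivalence, so that Â(Z)/Â(M) is the Pontrjagin character of an orthogonal bundle E on Z. (1) If both M and Z carry String structures ((1/2)p_1 = 0), then in degree 8: (1/6)p_2(M) = (1/6)p_2(Z) + 240·p_2(E). (2) If both M and Z carry String and Fivebrane structures ((1/2)p_1 = 0 and (1/6)p_2 = 0), then in degree 12: (1/240)p_3(M) = (1/240)p_3(Z) + 252·p_3(E). Hence a Fivebrane (resp. Ninebrane) structure on M is equivalent to a twisted Fivebrane (resp. twisted Ninebrane) structure on Z, and vice versa. -/
import Mathlib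


/-- Let `i : M ↪ Z` be an embedding which is a homotopy equivalence, so that
`Â(Z)/Â(M)` is the Pontrjagin character of an orthogonal bundle `E` on `Z`.
(1) If both `M` and `Z` carry String structures (`(1/2)p₁ = 0`), then in degree 8:
`(1/6)p₂(M) = (1/6)p₂(Z) + 240·p₂(E)`.
(2) If both `M` and `Z` carry String and Fivebrane structures (`(1/2)p₁ = 0` and
`(1/6)p₂ = 0`), then in degree 12: `(1/240)p₃(M) = (1/240)p₃(Z) + 252·p₃(E)`.
Hence a Fivebrane (resp. Ninebrane) structure on `M` is equivalent to a twisted Fivebrane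
(resp. twisted Ninebrane) structure on `Z`, and vice versa.

The rational cohomology of `Z ≃ M` is abstracted as a commutative `ℚ`-algebra `A`.  The
Â-class components of `M` and `Z` are given by the standard formulas in the Pontrjagin
classes, and the Atiyah–Hirzebruch relation `Â(Z)/Â(M) ∈ chO(Z)`, i.e.
`Â(Z) = Â(M)·(Pontrjagin class of E)`, is imposed componentwise in degrees 4, 8, 12. -/
theorem ninebrane_stmt15
    (A : Type) [CommRing A] [Algebra ℚ A]
    (p1M p2M p3M p1Z p2Z p3Z p1E p2E p3E : A)
    (AM4 AM8 AM12 AZ4 AZ8 AZ12 : A)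
    -- Â-class components of M and of Z
    (hAM4 : AM4 = -((24 : ℚ)⁻¹ • p1M))
    (hAM8 : AM8 = (5760 : ℚ)⁻¹ • (7 * p1M ^ 2 - 4 * p2M))
    (hAM12 : AM12 = (967680 : ℚ)⁻¹ • (-(31 * p1M ^ 3) + 44 * (p1M * p2M) - 16 * p3M))
    (hAZ4 : AZ4 = -((24 : ℚ)⁻¹ • p1Z))
    (hAZ8 : AZ8 = (5760 : ℚ)⁻¹ • (7 * p1Z ^ 2 - 4 * p2Z))
    (hAZ12 : AZ12 = (967680 : ℚ)⁻¹ • (-(31 * p1Z ^ 3) + 44 * (p1Z * p2Z) - 16 * p3Z))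
    -- Atiyah–Hirzebruch: Â(Z)/Â(M) is the Pontrjagin class of the orthogonal bundle E
    (hAH4 : AZ4 = AM4 + p1E)
    (hAH8 : AZ8 = AM8 + AM4 * p1E + p2E)
    (hAH12 : AZ12 = AM12 + AM8 * p1E + AM4 * p2E + p3E) :
    ((2 : ℚ)⁻¹ • p1M = 0 → (2 : ℚ)⁻¹ • p1Z = 0 →
      (6 : ℚ)⁻¹ • p2M = (6 : ℚ)⁻¹ • p2Z + (240 : ℚ) • p2E) ∧
    ((2 : ℚ)⁻¹ • p1M = 0 → (2 : ℚ)⁻¹ • p1Z = 0 →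
      (6 : ℚ)⁻¹ • p2M = 0 → (6 : ℚ)⁻¹ • p2Z = 0 →
      (240 : ℚ)⁻¹ • p3M = (240 : ℚ)⁻¹ • p3Z + (252 : ℚ) • p3E) ∧
    ((2 : ℚ)⁻¹ • p1M = 0 → (2 : ℚ)⁻¹ • p1Z = 0 →
      ((6 : ℚ)⁻¹ • p2M = 0 ↔ (6 : ℚ)⁻¹ • p2Z + (240 : ℚ) • p2E = 0)) ∧
    ((2 : ℚ)⁻¹ • p1M = 0 → (2 : ℚ)⁻¹ • p1Z = 0 →
      (6 : ℚ)⁻¹ • p2M = 0 → (6 : ℚ)⁻¹ • p2Z = 0 →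
      ((240 : ℚ)⁻¹ • p3M = 0 ↔ (240 : ℚ)⁻¹ • p3Z + (252 : ℚ) • p3E = 0)) := by

  have hcan : ∀ (c : ℚ), c ≠ 0 → ∀ x y : A, c • x = c • y → x = y := by
    intro c hc x y h
    have h2 := congrArg (fun z => c⁻¹ • z) h
    simpa [smul_smul, inv_mul_cancel₀ hc] using h2
  have hinv : ∀ (c : ℚ) (x : A), c ≠ 0 → c⁻¹ • x = 0 → x = 0 := by
    intro c x hc h
    have h2 := congrArg (fun y => c • y) h
    simpa [smul_smul, mul_inv_cancel₀ hc] using h2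
  have main1 : (2 : ℚ)⁻¹ • p1M = 0 → (2 : ℚ)⁻¹ • p1Z = 0 →
      (6 : ℚ)⁻¹ • p2M = (6 : ℚ)⁻¹ • p2Z + (240 : ℚ) • p2E := by
    intro h1 h2
    have hp1M : p1M = 0 := hinv 2 p1M (by norm_num) h1
    have hp1Z : p1Z = 0 := hinv 2 p1Z (by norm_num) h2
    subst hAM4 hAM8 hAZ4 hAZ8 hp1M hp1Z
    have hE1 : p1E = 0 := by simpa using hAH4.symm
    subst hE1
    have h' := congrArg (fun x : A => (5760 : ℚ) • x) hAH8
    simp only [smul_add, smul_smul, smul_zero, mul_zero, zero_mul, neg_zero] at h'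
    norm_num [Algebra.smul_def, map_ofNat] at h'
    rw [inv_smul_eq_iff₀ (by norm_num : (6 : ℚ) ≠ 0)]
    apply hcan 4 (by norm_num)
    simp only [smul_add, smul_smul]
    norm_num [Algebra.smul_def, map_ofNat]
    linear_combination h'
  have main2 : (2 : ℚ)⁻¹ • p1M = 0 → (2 : ℚ)⁻¹ • p1Z = 0 →
      (6 : ℚ)⁻¹ • p2M = 0 → (6 : ℚ)⁻¹ • p2Z = 0 →
      (240 : ℚ)⁻¹ • p3M = (240 : ℚ)⁻¹ • p3Z + (252 : ℚ) • p3E := by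
    intro h1 h2 h3 h4
    have hp1M : p1M = 0 := hinv 2 p1M (by norm_num) h1
    have hp1Z : p1Z = 0 := hinv 2 p1Z (by norm_num) h2
    have hp2M : p2M = 0 := hinv 6 p2M (by norm_num) h3
    have hp2Z : p2Z = 0 := hinv 6 p2Z (by norm_num) h4
    subst hAM4 hAM8 hAM12 hAZ4 hAZ8 hAZ12 hp1M hp1Z hp2M hp2Z
    have hE1 : p1E = 0 := by simpa using hAH4.symm
    subst hE1
    have h' := congrArg (fun x : A => (967680 : ℚ) • x) hAH12
    simp only [smul_add, smul_smul, smul_zero, mul_zero, zero_mul, neg_zero] at h'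
    norm_num [Algebra.smul_def, map_ofNat] at h'
    rw [inv_smul_eq_iff₀ (by norm_num : (240 : ℚ) ≠ 0)]
    apply hcan 16 (by norm_num)
    simp only [smul_add, smul_smul]
    norm_num [Algebra.smul_def, map_ofNat]
    linear_combination h'
  refine ⟨main1, main2, fun h1 h2 => by rw [← main1 h1 h2],
    fun h1 h2 h3 h4 => by rw [← main2 h1 h2 h3 h4]⟩
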